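/- Let p be a prime, k a field of characteristic p, and A = k[x]/(x^p) the truncated polynomial algebra. If a group G admits a connected grading of A (a grading whose support generates G), then G is cyclic. -/
import Mathlib

set_option synthInstance.maxHeartbeats 400000
set_option maxHeartbeats 1000000
set_option linter.unusedSectionVars false

section aux
variable {k : Type*} [Field k] {A : Type*} [CommRing A] [Algebra k A]
variable {G : Type*} [Group G] (X : G → Submodule k A)

theorem grading_unique (hind : iSupIndep X) (s : Finset G) (c : G → A)
    (hc : ∀ h ∈ s, c h ∈ X h) (h0 : ∑ h ∈ s, c h = 0) : ∀ h ∈ s, c h = 0 := by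
  classical
  intro h₀ hh₀
  have hsum : c h₀ + ∑ h ∈ s.erase h₀, c h = 0 := by
    rw [Finset.add_sum_erase _ _ hh₀]; exact h0
  have h1 : c h₀ ∈ X h₀ := hc _ hh₀
  have h2 : c h₀ ∈ ⨆ j, ⨆ (_ : j ≠ h₀), X j := by
    have : c h₀ = -∑ h ∈ s.erase h₀, c h := by linear_combination hsum
    rw [this]
    refine Submodule.neg_mem _ (Submodule.sum_mem _ fun h hh => ?_)
    have hne : h ≠ h₀ := Finset.ne_of_mem_erase hh
    exact le_iSup₂ (f := fun j (_ : j ≠ h₀) => X j) h hne (hc _ (Finset.mem_of_mem_erase hh))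
  simpa using (hind h₀).le_bot ⟨h1, h2⟩

theorem grading_one_mem (hind : iSupIndep X) (hsup : (⨆ g, X g) = ⊤)
    (hmul : ∀ g h, X g * X h ≤ X (g * h)) : (1 : A) ∈ X 1 := by
  classical
  obtain ⟨f, hf, hfsum⟩ := (Submodule.mem_iSup_iff_exists_finsupp X 1).mp
    (hsup ▸ Submodule.mem_top)
  have key : ∀ g (a : A), a ∈ X g → a * f 1 = a := by
    intro g a ha
    set t : Finset G := insert g (f.support.image (g * ·)) with ht
    set c : G → A := fun g' => a * f (g⁻¹ * g') - if g' = g then a else 0 with hc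
    have hmemc : ∀ h ∈ t, c h ∈ X h := by
      intro h _
      refine Submodule.sub_mem _ ?_ ?_
      · have : a * f (g⁻¹ * h) ∈ X (g * (g⁻¹ * h)) :=
          hmul _ _ (Submodule.mul_mem_mul ha (hf _))
        simpa [mul_inv_cancel_left] using this
      · split
        · next he => subst he; exact ha
        · exact Submodule.zero_mem _
    have hsum0 : ∑ h ∈ t, c h = 0 := by
      have h2 : ∑ h ∈ t, (if h = g then a else 0) = a := by
        rw [Finset.sum_ite_eq' t g (fun _ => a)]
        simp [ht]
      have h1 : ∑ h ∈ t, a * f (g⁻¹ * h) = a := by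
        rw [ht, Finset.sum_insert_of_eq_zero_if_notMem]
        · rw [Finset.sum_image (by intro x _ y _ h; exact mul_left_cancel h)]
          have he : ∑ x ∈ f.support, a * f (g⁻¹ * (g * x)) = ∑ x ∈ f.support, a * f x := by
            refine Finset.sum_congr rfl fun x _ => by rw [inv_mul_cancel_left]
          rw [he, ← Finset.mul_sum]
          have : ∑ x ∈ f.support, f x = 1 := hfsum
          rw [this, mul_one]
        · intro hg
          have : f (g⁻¹ * g) = 0 := by
            rw [inv_mul_cancel]
            by_contra hne
            exact hg (Finset.mem_image.mpr ⟨1, Finsupp.mem_support_iff.mpr hne, mul_one g⟩)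
          rw [this, mul_zero]
      rw [hc]
      push_cast [Finset.sum_sub_distrib]
      rw [h1, h2, sub_self]
    have := grading_unique X hind t c hmemc hsum0 g (Finset.mem_insert_self _ _)
    simpa [hc, sub_eq_zero] using this
  have htop : ⊤ ≤ LinearMap.eqLocus (LinearMap.mulRight k (f 1)) LinearMap.id := by
    rw [← hsup]
    exact iSup_le fun g a ha => key g a ha
  have h1 : (1 : A) * f 1 = 1 := htop (Submodule.mem_top (x := (1 : A)))
  rw [one_mul] at h1
  rw [← h1]
  exact hf 1

theorem grading_pow_mem (hind : iSupIndep X) (hsup : (⨆ g, X g) = ⊤)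
    (hmul : ∀ g h, X g * X h ≤ X (g * h)) {g : G} {a : A} (ha : a ∈ X g) :
    ∀ i : ℕ, a ^ i ∈ X (g ^ i) := by
  intro i
  induction i with
  | zero => simpa using grading_one_mem X hind hsup hmul
  | succ n ih =>
    rw [pow_succ, pow_succ]
    exact hmul _ _ (Submodule.mul_mem_mul ih ha)

/-- Core argument, for an abstract algebra `A` that looks like `k[x]/(x^p)`. -/
theorem grading_cyclic_core (p : ℕ) (hp : p.Prime) [Module.Finite k A]
    (x : A) (π : A →+* k)
    (hxp : x ^ p = 0) (hx0 : x ≠ 0) (π_x : π x = 0)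
    (π_alg : ∀ c : k, π (algebraMap k A c) = c)
    (decomp : ∀ a : A, ∃ b, a = algebraMap k A (π a) + x * b)
    (hfr : Module.finrank k A = p) (hchar : CharP k p)
    (hind : iSupIndep X) (hsup : (⨆ g, X g) = ⊤)
    (hmul : ∀ g h, X g * X h ≤ X (g * h))
    (hconn : Subgroup.closure {g | X g ≠ ⊥} = ⊤) :
    IsCyclic G := by
  classical
  have hp2 : 2 ≤ p := hp.two_le
  haveI hfact : Fact p.Prime := ⟨hp⟩
  haveI : Nontrivial A := nontrivial_of_ne x 0 hx0
  have π_smul : ∀ (c : k) (a : A), π (c • a) = c * π a := by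
    intro c a
    rw [Algebra.smul_def, map_mul, π_alg]
  have ker_x : ∀ a, π a = 0 → ∃ b, a = x * b := by
    intro a ha
    obtain ⟨b, hb⟩ := decomp a
    rw [ha, map_zero, zero_add] at hb
    exact ⟨b, hb⟩
  have unit_of : ∀ a, π a ≠ 0 → IsUnit a := by
    intro a ha
    obtain ⟨b, hb⟩ := decomp a
    have hnil : IsNilpotent (x * b) := ⟨p, by rw [mul_pow, hxp, zero_mul]⟩
    have hu : IsUnit (algebraMap k A (π a)) :=
      (isUnit_iff_ne_zero.mpr ha).map (algebraMap k A)
    rw [hb]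
    exact hnil.isUnit_add_left_of_commute hu (Commute.all _ _)
  have hone : (1 : A) ∈ X 1 := grading_one_mem X hind hsup hmul
  have hpow : ∀ {g : G} {a : A}, a ∈ X g → ∀ i : ℕ, a ^ i ∈ X (g ^ i) :=
    fun ha => grading_pow_mem X hind hsup hmul ha
  have final : ∀ g : G, (∀ h, X h ≠ ⊥ → h ∈ Subgroup.zpowers g) → IsCyclic G := by
    intro g hg
    refine ⟨⟨g, fun h => ?_⟩⟩
    have hle : Subgroup.closure {g' | X g' ≠ ⊥} ≤ Subgroup.zpowers g :=
      (Subgroup.closure_le _).mpr hg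
    rw [hconn] at hle
    exact hle (Subgroup.mem_top h)
  by_cases hcase : ∃ (g : G) (a : A), g ≠ 1 ∧ a ∈ X g ∧ π a ≠ 0
  · -- Case B : a homogeneous unit of nontrivial degree exists
    obtain ⟨g, a, hg1, haX, haπ⟩ := hcase
    set v : A := (π a)⁻¹ • a with hv
    have hvX : v ∈ X g := Submodule.smul_mem _ _ haX
    have πv : π v = 1 := by rw [hv, π_smul, inv_mul_cancel₀ haπ]
    have hvunit : IsUnit v := unit_of v (by rw [πv]; exact one_ne_zero)
    have hinj : Function.Injective (algebraMap k A) := by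
      intro c d hcd
      have := congrArg π hcd
      rwa [π_alg, π_alg] at this
    haveI : CharP A p := charP_of_injective_algebraMap hinj p
    have hvp : v ^ p = 1 := by
      have hn : π (v - 1) = 0 := by rw [map_sub, πv, map_one, sub_self]
      obtain ⟨b, hb⟩ := ker_x _ hn
      have hveq : v = 1 + x * b := by rw [← hb]; ring
      rw [hveq, add_pow_char (R := A) (p := p), one_pow, mul_pow, hxp, zero_mul, add_zero]
    have hgp : g ^ p = 1 := by
      by_contra hne
      have h1 : (1 : A) ∈ ⨆ j, ⨆ (_ : j ≠ (1 : G)), X j :=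
        le_iSup₂ (f := fun j (_ : j ≠ (1 : G)) => X j) (g ^ p) hne (hvp ▸ hpow hvX p)
      exact (one_ne_zero : (1 : A) ≠ 0) (by simpa using (hind 1).le_bot ⟨hone, h1⟩)
    have hord : orderOf g = p := by
      have hdvd : orderOf g ∣ p := orderOf_dvd_of_pow_eq_one hgp
      rcases hp.eq_one_or_self_of_dvd _ hdvd with h | h
      · exact absurd (orderOf_eq_one_iff.mp h) hg1
      · exact h
    haveI : Fintype {i // X i ≠ ⊥} := hind.fintypeNeBotOfFiniteDimensional
    apply final g
    intro h hh
    by_contra hhz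
    have hne : ∀ i : ℕ, g ^ i ≠ h := fun i hi =>
      hhz (hi ▸ Subgroup.npow_mem_zpowers g i)
    have hXgi : ∀ i : ℕ, X (g ^ i) ≠ ⊥ := by
      intro i
      rw [Submodule.ne_bot_iff]
      exact ⟨v ^ i, hpow hvX i, (hvunit.pow i).ne_zero⟩
    set emb : Fin (p + 1) → {i // X i ≠ ⊥} := fun i =>
      if hip : (i : ℕ) < p then ⟨g ^ (i : ℕ), hXgi _⟩ else ⟨h, hh⟩ with hemb
    have hinj : Function.Injective emb := by
      intro i j hij
      have hij' : (emb i).1 = (emb j).1 := congrArg Subtype.val hij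
      by_cases hi : (i : ℕ) < p <;> by_cases hj : (j : ℕ) < p
      · rw [hemb] at hij'
        simp only [dif_pos hi, dif_pos hj] at hij'
        have := pow_injOn_Iio_orderOf (x := g) (by rwa [hord]) (by rwa [hord]) hij'
        exact Fin.ext this
      · rw [hemb] at hij'
        simp only [dif_pos hi, dif_neg hj] at hij'
        exact absurd hij' (hne _)
      · rw [hemb] at hij'
        simp only [dif_neg hi, dif_pos hj] at hij'
        exact absurd hij'.symm (hne _)
      · have h1 : (i : ℕ) = p := by omega
        have h2 : (j : ℕ) = p := by omega
        exact Fin.ext (by omega)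
    have hcard : Fintype.card {i // X i ≠ ⊥} ≤ p := by
      have := hind.subtype_ne_bot_le_finrank
      rwa [hfr] at this
    have hcard2 : p + 1 ≤ Fintype.card {i // X i ≠ ⊥} := by
      have := Fintype.card_le_of_injective emb hinj
      rwa [Fintype.card_fin] at this
    omega
  · -- Case A : every homogeneous element of nontrivial degree is a nonunit
    push_neg at hcase
    have hQ : ∃ (gy : G) (y : A),
        y ∈ X gy ∧ π y = 0 ∧ ¬∃ b, y = x * (x * b) := by
      by_contra hQ'
      push_neg at hQ'
      have hQall : ∀ a : A, π a = 0 → ∃ b, a = x * (x * b) := by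
        intro a ha
        obtain ⟨f, hf, hfsum⟩ := (Submodule.mem_iSup_iff_exists_finsupp X a).mp
          (hsup ▸ Submodule.mem_top)
        have hπf : ∀ h : G, π (f h) = 0 := by
          intro h
          by_cases h1 : h = 1
          · subst h1
            have heq : π a = π (f 1) := by
              conv_lhs => rw [← hfsum]
              rw [Finsupp.sum, map_sum]
              exact Finset.sum_eq_single 1
                (fun b hb hb1 => hcase b (f b) hb1 (hf b))
                (fun h1n => by rw [Finsupp.notMem_support_iff.mp h1n, map_zero])
            rw [← heq, ha]
          · exact hcase h (f h) h1 (hf h)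
        rw [← hfsum, Finsupp.sum]
        refine Finset.sum_induction _ (fun z => ∃ b, z = x * (x * b)) ?_ ⟨0, by ring⟩ ?_
        · rintro u w ⟨bu, rfl⟩ ⟨bw, rfl⟩
          exact ⟨bu + bw, by ring⟩
        · intro h _
          exact hQ' h (f h) (hf h) (hπf h)
      obtain ⟨b, hb⟩ := hQall x π_x
      have hu : IsUnit (1 - x * b) := unit_of _ (by
        rw [map_sub, map_one, map_mul, π_x, zero_mul, sub_zero]; exact one_ne_zero)
      have hzero : x * (1 - x * b) = 0 := by
        rw [mul_sub, mul_one, ← hb, sub_self]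
      exact hx0 ((hu.mul_right_eq_zero).mp (by linear_combination hzero))
    obtain ⟨g, y, hyX, hyπ, hyQ⟩ := hQ
    obtain ⟨w, hw⟩ := ker_x y hyπ
    have hwu : IsUnit w := by
      by_contra hwu'
      have hπw : π w = 0 := by
        by_contra hc; exact hwu' (unit_of w hc)
      obtain ⟨c, hc⟩ := ker_x w hπw
      exact hyQ ⟨c, by rw [hw, hc]⟩
    have hyW : ∀ i : ℕ, y ^ i ∈ (⨆ i : ℕ, X (g ^ i)) := fun i =>
      le_iSup (fun i : ℕ => X (g ^ i)) i (hpow hyX i)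
    obtain ⟨wu, hwu'⟩ := hwu
    have hxy : x = y * (↑wu⁻¹ : A) := by
      rw [hw, ← hwu', mul_assoc, Units.mul_inv, mul_one]
    have main : ∀ d : ℕ, d ≤ p → ∀ a, x ^ (p - d) * a ∈ (⨆ i : ℕ, X (g ^ i)) := by
      intro d
      induction d with
      | zero => intro _ a; rw [Nat.sub_zero, hxp, zero_mul]; exact Submodule.zero_mem _
      | succ n ih =>
        intro hn a
        have hn' : n ≤ p := by omega
        have hstep : p - n = (p - (n + 1)) + 1 := by omega
        set j := p - (n + 1) with hj
        have ihj : ∀ b, x ^ (j + 1) * b ∈ (⨆ i : ℕ, X (g ^ i)) := by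
          intro b; have := ih hn' b; rwa [hstep] at this
        have hyj : y ^ j = x ^ j * w ^ j := by rw [hw, mul_pow]
        have hxjW : x ^ j ∈ (⨆ i : ℕ, X (g ^ i)) := by
          obtain ⟨b', hb'⟩ := decomp ((↑wu⁻¹ : A) ^ j)
          have hxj : x ^ j = π ((↑wu⁻¹ : A) ^ j) • y ^ j
              + x ^ (j + 1) * (w ^ j * b') := by
            rw [Algebra.smul_def]
            calc x ^ j = y ^ j * ((↑wu⁻¹ : A) ^ j) := by
                  rw [hxy, mul_pow]
              _ = y ^ j * (algebraMap k A (π ((↑wu⁻¹ : A) ^ j)) + x * b') := by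
                  rw [← hb']
              _ = algebraMap k A (π ((↑wu⁻¹ : A) ^ j)) * y ^ j
                  + x ^ (j + 1) * (w ^ j * b') := by
                  rw [hyj]; ring
          rw [hxj]
          exact Submodule.add_mem _ (Submodule.smul_mem _ _ (hyW j)) (ihj _)
        obtain ⟨b, hb⟩ := decomp a
        have hsplit : x ^ j * a = π a • x ^ j + x ^ (j + 1) * b := by
          conv_lhs => rw [hb]
          rw [Algebra.smul_def]; ring
        rw [hsplit]
        exact Submodule.add_mem _ (Submodule.smul_mem _ _ hxjW) (ihj b)
    have hTop : ∀ a : A, a ∈ (⨆ i : ℕ, X (g ^ i)) := by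
      intro a
      have := main p le_rfl a
      simpa using this
    apply final g
    intro h hh
    by_contra hhz
    have hne : ∀ i : ℕ, g ^ i ≠ h := fun i hi =>
      hhz (hi ▸ Subgroup.npow_mem_zpowers g i)
    obtain ⟨z, hz, hz0⟩ := (Submodule.ne_bot_iff _).mp hh
    have h1 : z ∈ ⨆ j, ⨆ (_ : j ≠ h), X j := by
      have hle : (⨆ i : ℕ, X (g ^ i)) ≤ ⨆ j', ⨆ (_ : j' ≠ h), X j' :=
        iSup_le fun i => le_iSup₂ (f := fun j' (_ : j' ≠ h) => X j') (g ^ i) (hne i)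
      exact hle (hTop z)
    exact hz0 (by simpa using (hind h).le_bot ⟨hz, h1⟩)

end aux

set_option synthInstance.maxHeartbeats 400000
/-- Let `p` be a prime, `k` a field of characteristic `p` and `A = k[x]/(x^p)`.  If a group
`G` admits a connected grading of `A` (a grading whose support generates `G`), then `G` is
cyclic. -/
theorem stmt6 (p : ℕ) (hp : p.Prime) (k : Type*) [Field k] (hchar : CharP k p)
    (G : Type*) [Group G]
    (X : G → Submodule k (Polynomial k ⧸ (Ideal.span {Polynomial.X ^ p} : Ideal (Polynomial k))))
    (hind : iSupIndep X) (hsup : (⨆ g, X g) = ⊤)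
    (hmul : ∀ g h, X g * X h ≤ X (g * h))
    (hconn : Subgroup.closure {g | X g ≠ ⊥} = ⊤) :
    IsCyclic G := by
  classical
  have hπ0 : ∀ a ∈ (Ideal.span {Polynomial.X ^ p} : Ideal (Polynomial k)),
      Polynomial.evalRingHom (0 : k) a = 0 := by
    intro a ha
    rw [Ideal.mem_span_singleton] at ha
    obtain ⟨b, rfl⟩ := ha
    simp [zero_pow hp.ne_zero]
  have hxp : (Ideal.Quotient.mk (Ideal.span {Polynomial.X ^ p} : Ideal (Polynomial k))
      Polynomial.X) ^ p = 0 := by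
    rw [← map_pow, Ideal.Quotient.eq_zero_iff_mem]
    exact Ideal.mem_span_singleton_self _
  have hx0 : (Ideal.Quotient.mk (Ideal.span {Polynomial.X ^ p} : Ideal (Polynomial k))
      Polynomial.X) ≠ 0 := by
    rw [Ne, Ideal.Quotient.eq_zero_iff_mem, Ideal.mem_span_singleton]
    intro hdvd
    have h1 := Polynomial.natDegree_le_of_dvd hdvd Polynomial.X_ne_zero
    rw [Polynomial.natDegree_X_pow, Polynomial.natDegree_X] at h1
    have := hp.two_le
    omega
  have π_mk : ∀ q : Polynomial k,
      Ideal.Quotient.lift _ (Polynomial.evalRingHom 0) hπ0 (Ideal.Quotient.mk _ q)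
        = Polynomial.eval 0 q := by
    intro q; rw [Ideal.Quotient.lift_mk]; rfl
  have π_x : Ideal.Quotient.lift _ (Polynomial.evalRingHom 0) hπ0
      (Ideal.Quotient.mk (Ideal.span {Polynomial.X ^ p} : Ideal (Polynomial k))
        Polynomial.X) = 0 := by
    rw [π_mk, Polynomial.eval_X]
  have π_alg : ∀ c : k,
      Ideal.Quotient.lift _ (Polynomial.evalRingHom 0) hπ0
        (algebraMap k (Polynomial k ⧸ (Ideal.span {Polynomial.X ^ p} : Ideal (Polynomial k))) c)
        = c := by
    intro c
    rw [← Ideal.Quotient.mk_algebraMap, π_mk, Polynomial.algebraMap_eq, Polynomial.eval_C]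
  have decomp : ∀ a : Polynomial k ⧸ (Ideal.span {Polynomial.X ^ p} : Ideal (Polynomial k)),
      ∃ b, a = algebraMap k _ (Ideal.Quotient.lift _ (Polynomial.evalRingHom 0) hπ0 a)
        + Ideal.Quotient.mk (Ideal.span {Polynomial.X ^ p} : Ideal (Polynomial k))
            Polynomial.X * b := by
    intro a
    obtain ⟨q, rfl⟩ := Ideal.Quotient.mk_surjective a
    refine ⟨Ideal.Quotient.mk _ q.divX, ?_⟩
    conv_lhs => rw [← Polynomial.X_mul_divX_add q]
    rw [map_add, map_mul, π_mk, ← Polynomial.coeff_zero_eq_eval_zero, add_comm]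
    congr 1
  haveI hfin : Module.Finite k
      (Polynomial k ⧸ (Ideal.span {Polynomial.X ^ p} : Ideal (Polynomial k))) :=
    Module.Finite.of_basis
      (AdjoinRoot.powerBasis (f := (Polynomial.X ^ p : Polynomial k))
        (pow_ne_zero _ Polynomial.X_ne_zero)).basis
  have hfr : Module.finrank k
      (Polynomial k ⧸ (Ideal.span {Polynomial.X ^ p} : Ideal (Polynomial k))) = p := by
    have h := (AdjoinRoot.powerBasis (f := (Polynomial.X ^ p : Polynomial k))
      (pow_ne_zero _ Polynomial.X_ne_zero)).finrank
    rw [AdjoinRoot.powerBasis_dim, Polynomial.natDegree_X_pow] at h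
    exact h
  exact grading_cyclic_core X p hp _ _ hxp hx0 π_x π_alg decomp hfr hchar hind hsup hmul hconn
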